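/- The 4×4 matrix M with rows (0,0,2,1), (0,0,1,1), (2,1,0,0), (1,1,0,0) is irreducible and expanding (its square is block diagonal with two 2×2 positive blocks, and powers of M have unbounded entries), but M is not primitive: no power of M has all entries strictly positive. -/

import Mathlib

/-- The transition matrix of the free group automorphism
`a ↦ cdc, b ↦ cd, c ↦ aba, d ↦ ab`. -/
def M12 : Matrix (Fin 4) (Fin 4) ℕ :=
  !![0, 0, 2, 1;
     0, 0, 1, 1;
     2, 1, 0, 0;
     1, 1, 0, 0]

lemma M12_sq : M12 ^ 2 = !![5,3,0,0;3,2,0,0;0,0,5,3;0,0,3,2] := by decide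

lemma M12_step (m : ℕ) (i j : Fin 4) : 2 * (M12 ^ m) i j ≤ (M12 ^ (m + 2)) i j := by
  rw [pow_add, Matrix.mul_apply, Fin.sum_univ_four, M12_sq]
  fin_cases j <;> simp <;> omega

lemma M12_pos (i j : Fin 4) : ∃ m : ℕ, 0 < (M12 ^ m) i j := by
  fin_cases i <;> fin_cases j <;>
    first
      | exact ⟨1, by decide⟩
      | exact ⟨2, by decide⟩

lemma M12_grow (i j : Fin 4) (m0 : ℕ) (h : 0 < (M12 ^ m0) i j) (k : ℕ) :
    2 ^ k ≤ (M12 ^ (m0 + 2 * k)) i j := by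
  induction k with
  | zero => simpa using Nat.succ_le_of_lt h
  | succ k ih =>
      have : m0 + 2 * (k + 1) = (m0 + 2 * k) + 2 := by ring
      rw [this]
      calc 2 ^ (k + 1) = 2 * 2 ^ k := by ring
        _ ≤ 2 * (M12 ^ (m0 + 2 * k)) i j := by omega
        _ ≤ _ := M12_step _ _ _

lemma M12_even_zero (k : ℕ) : (M12 ^ (2 * k)) 0 2 = 0 ∧ (M12 ^ (2 * k)) 0 3 = 0 := by
  induction k with
  | zero => constructor <;> decide
  | succ k ih =>
      have : 2 * (k + 1) = 2 * k + 2 := by ring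
      rw [this, pow_add, M12_sq]
      constructor <;>
        · rw [Matrix.mul_apply, Fin.sum_univ_four]
          simp [ih.1, ih.2]

lemma M12_odd_zero (k : ℕ) : (M12 ^ (2 * k + 1)) 0 0 = 0 := by
  rw [pow_add, Matrix.mul_apply, Fin.sum_univ_four]
  simp [(M12_even_zero k).1, (M12_even_zero k).2,
    show M12 0 0 = 0 from rfl, show M12 1 0 = 0 from rfl]

/-- The matrix `M12` is irreducible and expanding (every entry of its powers has
`limsup = ∞`), but it is not primitive (Perron-Frobenius): no power of it has all
entries strictly positive. -/
theorem M12_irreducible_expanding_not_primitive :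
    (∀ i j, ∃ m : ℕ, 0 < (M12 ^ m) i j) ∧
    (∀ i j, Filter.limsup (fun m : ℕ => (((M12 ^ m) i j : ℕ) : EReal)) Filter.atTop = ⊤) ∧
    ¬ ∃ m : ℕ, ∀ i j, 0 < (M12 ^ m) i j := by
  refine ⟨M12_pos, ?_, ?_⟩
  · intro i j
    rw [EReal.eq_top_iff_forall_lt]
    intro y
    obtain ⟨m0, hm0⟩ := M12_pos i j
    have freq : ∀ n : ℕ, ∃ᶠ m in Filter.atTop,
        ((n : ℕ) : EReal) ≤ (((M12 ^ m) i j : ℕ) : EReal) := by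
      intro n
      rw [Filter.frequently_atTop]
      intro N
      refine ⟨m0 + 2 * (n + N), by omega, ?_⟩
      have h1 : 2 ^ (n + N) ≤ (M12 ^ (m0 + 2 * (n + N))) i j := M12_grow i j m0 hm0 _
      have h2 : n ≤ 2 ^ (n + N) := le_trans (Nat.le_add_right n N) (Nat.le_of_lt (n + N).lt_two_pow_self)
      exact_mod_cast Nat.cast_le.mpr (le_trans h2 h1)
    have hle : ((⌈y⌉₊ + 1 : ℕ) : EReal) ≤
        Filter.limsup (fun m : ℕ => (((M12 ^ m) i j : ℕ) : EReal)) Filter.atTop :=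
      Filter.le_limsup_of_frequently_le' (freq (⌈y⌉₊ + 1))
    refine lt_of_lt_of_le ?_ hle
    have : y < ((⌈y⌉₊ + 1 : ℕ) : ℝ) := by
      have := Nat.le_ceil y
      push_cast
      linarith
    calc (y : EReal) < (((⌈y⌉₊ + 1 : ℕ) : ℝ) : EReal) := EReal.coe_lt_coe_iff.2 this
      _ = ((⌈y⌉₊ + 1 : ℕ) : EReal) := by norm_cast
  · rintro ⟨m, h⟩
    rcases Nat.even_or_odd m with ⟨k, hk⟩ | ⟨k, hk⟩
    · have := (M12_even_zero k).1
      rw [show 2 * k = m by omega] at this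
      have := h 0 2; omega
    · have := M12_odd_zero k
      rw [show 2 * k + 1 = m by omega] at this
      have := h 0 0; omega
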